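/- Let A ∈ ℂ^{m×n} have full rank, i.e., rank(A) = min(m,n), let A† be its Moore–Penrose pseudoinverse, let S ⊆ {1,…,m}×{1,…,n} be an arbitrary sparsity pattern, and let F(A,S) be the corresponding feasible set. Then the minimizer of J(·;A) over F(A,S) is globally unique: there is exactly one X ∈ F(A,S) with J(X;A) ≤ J(Y;A) for all Y ∈ F(A,S). -/

import Mathlib

open scoped Matrix InnerProductSpace ComplexInnerProductSpace

/-- `B` is the Moore–Penrose pseudoinverse of `A`. -/
def IsMPInv {m n : ℕ} (A : Matrix (Fin m) (Fin n) ℂ) (B : Matrix (Fin n) (Fin m) ℂ) : Prop :=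
  A * B * A = A ∧ B * A * B = B ∧ (A * B)ᴴ = A * B ∧ (B * A)ᴴ = B * A

/-- Squared Frobenius norm. -/
noncomputable def frobSq {m n : ℕ} (M : Matrix (Fin m) (Fin n) ℂ) : ℝ :=
  ∑ i, ∑ j, ‖M i j‖ ^ 2

/-- The misfit functional `J(X;A) = ½‖(X-A)A†‖_F² + ½‖A†(X-A)‖_F²`,
with the pseudoinverse `Ad` of `A` given explicitly. -/
noncomputable def Jmis {m n : ℕ} (X A : Matrix (Fin m) (Fin n) ℂ)
    (Ad : Matrix (Fin n) (Fin m) ℂ) : ℝ :=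
  (1 / 2) * frobSq ((X - A) * Ad) + (1 / 2) * frobSq (Ad * (X - A))

/-- The feasible set `F(A,S)`: the null space of `A` is contained in that of `X`,
the null space of `A*` in that of `X*`, and `X` vanishes outside the pattern `S`. -/
def Feasible {m n : ℕ} (A X : Matrix (Fin m) (Fin n) ℂ) (S : Set (Fin m × Fin n)) : Prop :=
  (∀ v : Fin n → ℂ, A.mulVec v = 0 → X.mulVec v = 0) ∧
  (∀ v : Fin m → ℂ, Aᴴ.mulVec v = 0 → Xᴴ.mulVec v = 0) ∧
  (∀ ij : Fin m × Fin n, ij ∉ S → X ij.1 ij.2 = 0)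

/-- The linear map `X ↦ (X * Ad, Ad * X)`, flattened into a Euclidean space. -/
noncomputable def Lmap {m n : ℕ} (Ad : Matrix (Fin n) (Fin m) ℂ) :
    Matrix (Fin m) (Fin n) ℂ →ₗ[ℂ] EuclideanSpace ℂ ((Fin m × Fin m) ⊕ (Fin n × Fin n)) where
  toFun X := WithLp.toLp 2 (fun z => Sum.elim (fun p => (X * Ad) p.1 p.2) (fun p => (Ad * X) p.1 p.2) z)
  map_add' X Y := by
    ext z
    cases z with
    | inl p => simp [Matrix.add_mul, Matrix.mul_add]
    | inr p => simp [Matrix.add_mul, Matrix.mul_add]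
  map_smul' c X := by
    ext z
    cases z with
    | inl p => simp [Matrix.smul_mul, Matrix.mul_smul]
    | inr p => simp [Matrix.smul_mul, Matrix.mul_smul]

lemma norm_Lmap_sq {m n : ℕ} (Ad : Matrix (Fin n) (Fin m) ℂ) (M : Matrix (Fin m) (Fin n) ℂ) :
    ‖Lmap Ad M‖ ^ 2 = frobSq (M * Ad) + frobSq (Ad * M) := by
  rw [EuclideanSpace.norm_eq, Real.sq_sqrt (by positivity)]
  rw [Fintype.sum_sum_type]
  simp [frobSq, Fintype.sum_prod_type, Lmap]

lemma Jmis_eq {m n : ℕ} (X A : Matrix (Fin m) (Fin n) ℂ) (Ad : Matrix (Fin n) (Fin m) ℂ) :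
    Jmis X A Ad = (1 / 2) * ‖Lmap Ad X - Lmap Ad A‖ ^ 2 := by
  rw [← map_sub, norm_Lmap_sq, Jmis]
  ring

/-- A full-rank idempotent square matrix is the identity. -/
lemma idem_full_rank_eq_one {k : ℕ} (P : Matrix (Fin k) (Fin k) ℂ)
    (hidem : P * P = P) (hrk : P.rank = k) : P = 1 := by
  have hsurj : Function.Surjective P.mulVecLin := by
    rw [← LinearMap.range_eq_top]
    apply Submodule.eq_top_of_finrank_eq
    have : Module.finrank ℂ (LinearMap.range P.mulVecLin) = P.rank := rfl
    rw [this, hrk]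
    simp [Module.finrank_pi]
  have hid : ∀ v, P.mulVec v = v := by
    intro v
    obtain ⟨w, hw⟩ := hsurj v
    have h2 : P.mulVec (P.mulVec w) = P.mulVec w := by
      rw [Matrix.mulVec_mulVec, hidem]
    have hw' : P.mulVec w = v := hw
    rw [hw'] at h2
    exact h2
  ext i j
  have := congrFun (hid (Pi.single j 1)) i
  simpa [Matrix.mulVec_single, Matrix.one_apply, Pi.single_apply, eq_comm] using this

/-- Full rank gives `A * Ad = 1` or `Ad * A = 1`. -/
lemma one_sided_inverse {m n : ℕ} (A : Matrix (Fin m) (Fin n) ℂ) (Ad : Matrix (Fin n) (Fin m) ℂ)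
    (hMP : IsMPInv A Ad) (hrank : A.rank = min m n) :
    A * Ad = 1 ∨ Ad * A = 1 := by
  obtain ⟨h1, h2, _, _⟩ := hMP
  rcases le_total m n with hmn | hnm
  · left
    apply idem_full_rank_eq_one
    · calc A * Ad * (A * Ad) = (A * Ad * A) * Ad := by rw [← Matrix.mul_assoc]
        _ = A * Ad := by rw [h1]
    · refine le_antisymm ((A * Ad).rank_le_height) ?_
      have : A.rank ≤ (A * Ad).rank := by
        calc A.rank = ((A * Ad) * A).rank := by rw [h1]
          _ ≤ (A * Ad).rank := Matrix.rank_mul_le_left _ _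
      rw [hrank, min_eq_left hmn] at this
      exact this
  · right
    apply idem_full_rank_eq_one
    · calc Ad * A * (Ad * A) = (Ad * A * Ad) * A := by rw [← Matrix.mul_assoc]
        _ = Ad * A := by rw [h2]
    · refine le_antisymm ((Ad * A).rank_le_height) ?_
      have : A.rank ≤ (Ad * A).rank := by
        calc A.rank = (A * (Ad * A)).rank := by rw [← Matrix.mul_assoc, h1]
          _ ≤ (Ad * A).rank := Matrix.rank_mul_le_right _ _
      rw [hrank, min_eq_right hnm] at this
      exact this

lemma Lmap_inj {m n : ℕ} (A : Matrix (Fin m) (Fin n) ℂ) (Ad : Matrix (Fin n) (Fin m) ℂ)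
    (hMP : IsMPInv A Ad) (hrank : A.rank = min m n) :
    ∀ M : Matrix (Fin m) (Fin n) ℂ, Lmap Ad M = 0 → M = 0 := by
  intro M hM
  have hright : Ad * M = 0 := by
    ext i j
    have := congrFun (congrArg WithLp.ofLp hM) (Sum.inr (i, j))
    simpa [Lmap] using this
  have hleft : M * Ad = 0 := by
    ext i j
    have := congrFun (congrArg WithLp.ofLp hM) (Sum.inl (i, j))
    simpa [Lmap] using this
  rcases one_sided_inverse A Ad hMP hrank with h | h
  · calc M = (A * Ad) * M := by rw [h, Matrix.one_mul]
      _ = A * (Ad * M) := by rw [Matrix.mul_assoc]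
      _ = 0 := by rw [hright, Matrix.mul_zero]
  · calc M = M * (Ad * A) := by rw [h, Matrix.mul_one]
      _ = (M * Ad) * A := by rw [Matrix.mul_assoc]
      _ = 0 := by rw [hleft, Matrix.zero_mul]

/-- The feasible set as a submodule. -/
noncomputable def feasSub {m n : ℕ} (A : Matrix (Fin m) (Fin n) ℂ) (S : Set (Fin m × Fin n)) :
    Submodule ℂ (Matrix (Fin m) (Fin n) ℂ) where
  carrier := {X | Feasible A X S}
  add_mem' := by
    rintro X Y ⟨hX1, hX2, hX3⟩ ⟨hY1, hY2, hY3⟩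
    refine ⟨fun v hv => ?_, fun v hv => ?_, fun ij hij => ?_⟩
    · rw [Matrix.add_mulVec, hX1 v hv, hY1 v hv, add_zero]
    · rw [Matrix.conjTranspose_add, Matrix.add_mulVec, hX2 v hv, hY2 v hv, add_zero]
    · simp [Matrix.add_apply, hX3 ij hij, hY3 ij hij]
  zero_mem' := by
    refine ⟨fun v _ => ?_, fun v _ => ?_, fun ij _ => rfl⟩
    · simp
    · simp
  smul_mem' := by
    rintro c X ⟨hX1, hX2, hX3⟩
    refine ⟨fun v hv => ?_, fun v hv => ?_, fun ij hij => ?_⟩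
    · rw [Matrix.smul_mulVec, hX1 v hv, smul_zero]
    · rw [Matrix.conjTranspose_smul, Matrix.smul_mulVec, hX2 v hv, smul_zero]
    · simp [Matrix.smul_apply, hX3 ij hij]

/-- if `A` has full rank, the minimizer of `J(·;A)` over the feasible set
`F(A,S)` is globally unique, for an arbitrary sparsity pattern `S`. -/
theorem stmt4 {m n : ℕ} (A : Matrix (Fin m) (Fin n) ℂ) (Ad : Matrix (Fin n) (Fin m) ℂ)
    (hMP : IsMPInv A Ad) (hrank : A.rank = min m n) (S : Set (Fin m × Fin n)) :
    ∃! X, Feasible A X S ∧ ∀ Y, Feasible A Y S → Jmis X A Ad ≤ Jmis Y A Ad := by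
  classical
  have hKcomplete : IsComplete (↑((feasSub A S).map (Lmap Ad)) :
      Set (EuclideanSpace ℂ ((Fin m × Fin m) ⊕ (Fin n × Fin n)))) :=
    ((feasSub A S).map (Lmap Ad)).complete_of_finiteDimensional
  obtain ⟨v, hvK, hvmin⟩ :=
    Submodule.exists_norm_eq_iInf_of_complete_subspace ((feasSub A S).map (Lmap Ad)) hKcomplete (Lmap Ad A)
  obtain ⟨X₀, hX₀F, hX₀v⟩ := hvK
  have hbdd : BddBelow (Set.range fun w : ((feasSub A S).map (Lmap Ad)) =>
      ‖Lmap Ad A - ↑w‖) := by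
    refine ⟨0, ?_⟩
    rintro x ⟨w, rfl⟩
    positivity
  have hJle : ∀ X Y : Matrix (Fin m) (Fin n) ℂ,
      (Jmis X A Ad ≤ Jmis Y A Ad ↔ ‖Lmap Ad A - Lmap Ad X‖ ≤ ‖Lmap Ad A - Lmap Ad Y‖) := by
    intro X Y
    rw [Jmis_eq, Jmis_eq, norm_sub_rev (Lmap Ad A) (Lmap Ad X),
      norm_sub_rev (Lmap Ad A) (Lmap Ad Y)]
    constructor
    · intro h
      have h' : ‖Lmap Ad X - Lmap Ad A‖ ^ 2 ≤ ‖Lmap Ad Y - Lmap Ad A‖ ^ 2 := by linarith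
      exact (pow_le_pow_iff_left₀ (norm_nonneg _) (norm_nonneg _) two_ne_zero).mp h'
    · intro h
      have := pow_le_pow_left₀ (norm_nonneg _) h 2
      linarith
  have hmin : ∀ Y, Feasible A Y S → Jmis X₀ A Ad ≤ Jmis Y A Ad := by
    intro Y hY
    rw [hJle, hX₀v, hvmin]
    exact ciInf_le hbdd ⟨Lmap Ad Y, ⟨Y, hY, rfl⟩⟩
  have hX₀feas : Feasible A X₀ S := hX₀F
  refine ⟨X₀, ⟨hX₀feas, hmin⟩, ?_⟩
  rintro X' ⟨hX'feas, hX'min⟩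
  have hX'K : Lmap Ad X' ∈ (feasSub A S).map (Lmap Ad) := ⟨X', hX'feas, rfl⟩
  have hX'dist : ‖Lmap Ad A - Lmap Ad X'‖ =
      ⨅ w : ((feasSub A S).map (Lmap Ad)), ‖Lmap Ad A - ↑w‖ := by
    refine le_antisymm ?_ (ciInf_le hbdd ⟨Lmap Ad X', hX'K⟩)
    refine le_ciInf ?_
    rintro ⟨w, Y, hYF, rfl⟩
    exact (hJle X' Y).mp (hX'min Y hYF)
  have hperp' : ∀ w ∈ (feasSub A S).map (Lmap Ad), ⟪Lmap Ad A - Lmap Ad X', w⟫_ℂ = 0 :=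
    (Submodule.norm_eq_iInf_iff_inner_eq_zero ((feasSub A S).map (Lmap Ad)) hX'K).mp hX'dist
  have hperp₀ : ∀ w ∈ (feasSub A S).map (Lmap Ad), ⟪Lmap Ad A - Lmap Ad X₀, w⟫_ℂ = 0 := by
    rw [hX₀v]
    exact (Submodule.norm_eq_iInf_iff_inner_eq_zero ((feasSub A S).map (Lmap Ad))
      (hX₀v ▸ ⟨X₀, hX₀F, rfl⟩)).mp hvmin
  have hdiffK : Lmap Ad X' - Lmap Ad X₀ ∈ (feasSub A S).map (Lmap Ad) := by
    rw [← map_sub]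
    exact ⟨X' - X₀, (feasSub A S).sub_mem hX'feas hX₀feas, rfl⟩
  have hdiff0 : ⟪Lmap Ad X' - Lmap Ad X₀, Lmap Ad X' - Lmap Ad X₀⟫_ℂ = 0 := by
    have h1 := hperp₀ _ hdiffK
    have h2 := hperp' _ hdiffK
    have h3 : ⟪(Lmap Ad A - Lmap Ad X₀) - (Lmap Ad A - Lmap Ad X'),
        Lmap Ad X' - Lmap Ad X₀⟫_ℂ = 0 := by
      rw [inner_sub_left, h1, h2, sub_zero]
    simpa [sub_sub_sub_cancel_left] using h3
  have hLeq : Lmap Ad X' = Lmap Ad X₀ :=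
    sub_eq_zero.mp (inner_self_eq_zero.mp hdiff0)
  have hz : X' - X₀ = 0 := by
    apply Lmap_inj A Ad hMP hrank
    rw [map_sub, hLeq, sub_self]
  exact sub_eq_zero.mp hz
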